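/- In the hyperbolic plane of curvature -1, fix a > 0 and consider triangles with sides a, b, c where the angle θ is at the vertex between the sides of lengths a and b. If b, c → ∞ with c - b → β ∈ ℝ, then cos θ → (cosh a - e^{β})/ sinh a; equivalently the limiting angle θ_∞ satisfies e^{β} = cosh a - sinh a · cos θ_∞. -/

import Mathlib

open Set Filter Topology

lemma cosh_div_sinh_limit (γ : ℝ) (u v : ℕ → ℝ)
    (hu : Tendsto u atTop atTop) (hv : Tendsto v atTop atTop)
    (h : Tendsto (fun n => v n - u n) atTop (𝓝 γ)) :
    Tendsto (fun n => Real.cosh (v n) / Real.sinh (u n)) atTop (𝓝 (Real.exp γ)) := by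
  have hexpu : Tendsto (fun n => Real.exp (-2 * u n)) atTop (𝓝 0) :=
    Real.tendsto_exp_atBot.comp ((tendsto_const_nhds.neg_mul_atTop (by norm_num) hu))
  have hexpv : Tendsto (fun n => Real.exp (-2 * v n)) atTop (𝓝 0) :=
    Real.tendsto_exp_atBot.comp ((tendsto_const_nhds.neg_mul_atTop (by norm_num) hv))
  have h1 : Tendsto (fun n => Real.exp (v n - u n) *
      ((1 + Real.exp (-2 * v n)) / (1 - Real.exp (-2 * u n)))) atTop
      (𝓝 (Real.exp γ * ((1 + 0) / (1 - 0)))) :=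
    ((Real.continuous_exp.tendsto γ).comp h).mul
      ((tendsto_const_nhds.add hexpv).div (tendsto_const_nhds.sub hexpu) (by norm_num))
  norm_num at h1
  refine h1.congr' ?_
  have key : ∀ A B : ℝ, 0 < B → 1 < A →
      (B / A) * ((1 + B⁻¹ * B⁻¹) / (1 - A⁻¹ * A⁻¹)) = ((B + B⁻¹) / 2) / ((A - A⁻¹) / 2) := by
    intro A B hB hA
    have hA0 : (0:ℝ) < A := by linarith
    have h1 : A * A - 1 ≠ 0 := by nlinarith
    have h2 : A - A⁻¹ ≠ 0 := by
      have : A⁻¹ < 1 := by rw [inv_lt_one_iff₀]; right; exact hA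
      intro hcon; nlinarith
    field_simp
  filter_upwards [hu.eventually_gt_atTop 0] with n hn
  have hA1 : 1 < Real.exp (u n) := by simpa using Real.exp_lt_exp.mpr hn
  have hB : (0:ℝ) < Real.exp (v n) := Real.exp_pos _
  rw [Real.cosh_eq, Real.sinh_eq, Real.exp_sub,
      show -(2 * u n) = (-(u n)) + (-(u n)) by ring,
      show -(2 * v n) = (-(v n)) + (-(v n)) by ring,
      Real.exp_add, Real.exp_add, Real.exp_neg, Real.exp_neg]
  exact key _ _ hB hA1

/-- in the hyperbolic plane of curvature -1, fix `a > 0`; for triangles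
with sides `a, b, c` and angle `θ` between the sides of lengths `a` and `b`, if
`b, c → ∞` with `c - b → β`, then `cos θ → (cosh a - e^β)/sinh a`; equivalently the
limiting angle `θ∞` satisfies `e^β = cosh a - sinh a · cos θ∞`. -/
theorem busemann_angle_limit (a β : ℝ) (ha : 0 < a)
    (b c θ : ℕ → ℝ)
    (hθ : ∀ n, θ n ∈ Set.Icc 0 Real.pi)
    (hb : Tendsto b atTop atTop) (hc : Tendsto c atTop atTop)
    (hcb : Tendsto (fun n => c n - b n) atTop (𝓝 β))
    (hlaw : ∀ n, Real.cosh (c n) =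
      Real.cosh a * Real.cosh (b n) - Real.sinh a * Real.sinh (b n) * Real.cos (θ n)) :
    Tendsto (fun n => Real.cos (θ n)) atTop
      (𝓝 ((Real.cosh a - Real.exp β) / Real.sinh a)) ∧
    ∀ θinf : ℝ, Tendsto θ atTop (𝓝 θinf) →
      Real.exp β = Real.cosh a - Real.sinh a * Real.cos θinf := by
  have hsa : 0 < Real.sinh a := Real.sinh_pos_iff.mpr ha
  have L1 : Tendsto (fun n => Real.cosh (b n) / Real.sinh (b n)) atTop (𝓝 (Real.exp 0)) :=
    cosh_div_sinh_limit 0 b b hb hb (by simp)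
  have L2 := cosh_div_sinh_limit β b c hb hc hcb
  have main : Tendsto (fun n => (Real.cosh a * (Real.cosh (b n) / Real.sinh (b n))
      - Real.cosh (c n) / Real.sinh (b n)) / Real.sinh a) atTop
      (𝓝 ((Real.cosh a * Real.exp 0 - Real.exp β) / Real.sinh a)) :=
    ((tendsto_const_nhds.mul L1).sub L2).div_const _
  rw [Real.exp_zero, mul_one] at main
  have hmain : Tendsto (fun n => Real.cos (θ n)) atTop
      (𝓝 ((Real.cosh a - Real.exp β) / Real.sinh a)) := by
    refine main.congr' ?_
    filter_upwards [hb.eventually_gt_atTop 0] with n hn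
    have hsb : 0 < Real.sinh (b n) := Real.sinh_pos_iff.mpr hn
    have := hlaw n
    field_simp
    nlinarith [this]
  refine ⟨hmain, fun θinf hθi => ?_⟩
  have hcos : Tendsto (fun n => Real.cos (θ n)) atTop (𝓝 (Real.cos θinf)) :=
    (Real.continuous_cos.tendsto θinf).comp hθi
  have heq := tendsto_nhds_unique hcos hmain
  rw [eq_div_iff (ne_of_gt hsa)] at heq
  linarith
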